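/- There are no rational numbers x1,x2,x3,d1,d2,d3 satisfying the Euler factor equations p̃2 = p̃3 = p̃4 = p̃5 = p̃6 = p̃7 = p̃8 = 0 such that the 3×2 matrix N1 with rows (1, d_i) has rank 1 and the 3×2 matrix N2 with rows (1, x_i) has rank 2. -/

import Mathlib

open Matrix

lemma sq_ne_two (q : ℚ) : q ^ 2 ≠ 2 := by
  intro h
  have h2 : ((q : ℝ)) ^ 2 = 2 := by exact_mod_cast h
  have hs : Real.sqrt 2 = |(q : ℝ)| := by rw [← h2]; exact Real.sqrt_sq_eq_abs _
  exact irrational_sqrt_two ⟨|q|, by rw [Rat.cast_abs, hs]⟩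

lemma transpose_eq (a b c : ℚ) :
    (!![(1:ℚ), a; 1, b; 1, c])ᵀ = ![![1,1,1], ![a,b,c]] := by
  ext i j
  fin_cases i <;> fin_cases j <;> simp [Matrix.vecHead, Matrix.vecTail]

lemma rank_two_of_ne (a b c : ℚ) (h : ¬(a = b ∧ a = c)) :
    (!![(1:ℚ), a; 1, b; 1, c]).rank = 2 := by
  rw [Matrix.rank_eq_finrank_span_cols, Matrix.col_def, transpose_eq]
  have hli : LinearIndependent ℚ ![![(1:ℚ),1,1], ![a,b,c]] := by
    rw [LinearIndependent.pair_iff]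
    intro s t hst
    have h0 := congrFun hst 0
    have h1 := congrFun hst 1
    have h2 := congrFun hst 2
    simp at h0 h1 h2
    constructor
    · by_contra hs
      have ht : t ≠ 0 := by rintro rfl; simp at h0; exact hs h0
      exact h ⟨by have := sub_eq_zero.mp (by linarith : (s + t*a) - (s + t*b) = 0);
                  exact mul_left_cancel₀ ht (by linarith),
               by have := sub_eq_zero.mp (by linarith : (s + t*a) - (s + t*c) = 0);
                  exact mul_left_cancel₀ ht (by linarith)⟩
    · by_contra ht
      exact h ⟨by have : t*(a-b) = 0 := by ring_nf; linarith
                  rcases mul_eq_zero.mp this with h' | h'; exact absurd h' ht; linarith [sub_eq_zero.mp h'],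
               by have : t*(a-c) = 0 := by ring_nf; linarith
                  rcases mul_eq_zero.mp this with h' | h'; exact absurd h' ht; linarith [sub_eq_zero.mp h']⟩
  have := finrank_span_eq_card hli
  simpa using this

lemma rank_le_one_aux (x : ℚ) : (!![(1:ℚ), x; 1, x; 1, x]).rank ≤ 1 := by
  rw [Matrix.rank_eq_finrank_span_cols, Matrix.col_def, transpose_eq]
  have hle : Submodule.span ℚ (Set.range ![![(1:ℚ),1,1], ![x,x,x]]) ≤
      Submodule.span ℚ {(![(1:ℚ),1,1] : Fin 3 → ℚ)} := by
    rw [Submodule.span_le]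
    rintro y ⟨i, rfl⟩
    fin_cases i
    · exact Submodule.subset_span (Set.mem_singleton _)
    · have hxx : (![x,x,x] : Fin 3 → ℚ) = x • ![(1:ℚ),1,1] := by
        ext j; fin_cases j <;> simp
      simp only [Matrix.cons_val_one, Matrix.head_cons, hxx]
      exact Submodule.smul_mem _ _ (Submodule.subset_span (Set.mem_singleton _))
  calc Module.finrank ℚ (Submodule.span ℚ (Set.range ![![(1:ℚ),1,1], ![x,x,x]]))
      ≤ Module.finrank ℚ (Submodule.span ℚ {(![(1:ℚ),1,1] : Fin 3 → ℚ)}) :=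
        Submodule.finrank_mono hle
    _ = 1 := finrank_span_singleton (by intro h; simpa using congrFun h 0)

theorem no_solution_rankN1_one_rankN2_two_euler :
    ¬ ∃ x1 x2 x3 d1 d2 d3 : ℚ,
      (x2^2 + x3^2 - d1^2) + (x3^2 + x1^2 - d2^2) + (x1^2 + x2^2 - d3^2) = 0 ∧
      d1 * (x2^2 + x3^2 - d1^2) + d2 * (x3^2 + x1^2 - d2^2) + d3 * (x1^2 + x2^2 - d3^2) = 0 ∧
      x1 * (x2^2 + x3^2 - d1^2) + x2 * (x3^2 + x1^2 - d2^2) + x3 * (x1^2 + x2^2 - d3^2) = 0 ∧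
      x1 * d1 * (x2^2 + x3^2 - d1^2) + x2 * d2 * (x3^2 + x1^2 - d2^2) + x3 * d3 * (x1^2 + x2^2 - d3^2) = 0 ∧
      x1^2 * (x2^2 + x3^2 - d1^2) + x2^2 * (x3^2 + x1^2 - d2^2) + x3^2 * (x1^2 + x2^2 - d3^2) = 0 ∧
      d1^2 * (x2^2 + x3^2 - d1^2) + d2^2 * (x3^2 + x1^2 - d2^2) + d3^2 * (x1^2 + x2^2 - d3^2) = 0 ∧
      x1^2 * d1^2 * (x2^2 + x3^2 - d1^2) + x2^2 * d2^2 * (x3^2 + x1^2 - d2^2) + x3^2 * d3^2 * (x1^2 + x2^2 - d3^2) = 0 ∧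
      (!![(1:ℚ), d1; 1, d2; 1, d3]).rank = 1 ∧
      (!![(1:ℚ), x1; 1, x2; 1, x3]).rank = 2 := by
  rintro ⟨x1, x2, x3, d1, d2, d3, h1, h2, h3, h4, h5, h6, h7, hN1, hN2⟩
  -- rank N1 = 1 forces d1 = d2 = d3
  have hd : d1 = d2 ∧ d1 = d3 := by
    by_contra h
    rw [rank_two_of_ne d1 d2 d3 h] at hN1
    exact absurd hN1 (by norm_num)
  obtain ⟨hd12, hd13⟩ := hd
  subst hd12; subst hd13
  -- rank N2 = 2 forces x's not all equal
  have hx : ¬(x1 = x2 ∧ x1 = x3) := by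
    rintro ⟨rfl, rfl⟩
    have := rank_le_one_aux x1
    omega
  clear h2 h3 h4 h6 h7 hN1 hN2
  -- algebra
  have key : (x1^2 - x2^2)^2 + (x2^2 - x3^2)^2 + (x3^2 - x1^2)^2 = 0 := by
    linear_combination (x1^2 + x2^2 + x3^2) * h1 - 3 * h5
  have e12 : x1^2 = x2^2 := by nlinarith [sq_nonneg (x1^2 - x2^2), sq_nonneg (x2^2 - x3^2), sq_nonneg (x3^2 - x1^2)]
  have e13 : x1^2 = x3^2 := by nlinarith [sq_nonneg (x1^2 - x2^2), sq_nonneg (x2^2 - x3^2), sq_nonneg (x3^2 - x1^2)]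
  have hd2 : d1^2 = 2 * x1^2 := by linarith
  have hx1 : x1 ≠ 0 := by
    rintro rfl
    have h2' : x2 = 0 := by
      have hz : x2 ^ 2 = 0 := by simpa using e12.symm
      exact pow_eq_zero_iff two_ne_zero |>.mp hz
    have h3' : x3 = 0 := by
      have hz : x3 ^ 2 = 0 := by simpa using e13.symm
      exact pow_eq_zero_iff two_ne_zero |>.mp hz
    exact hx ⟨h2'.symm, h3'.symm⟩
  have : (d1 / x1)^2 = 2 := by
    field_simp
    linarith
  exact sq_ne_two _ this
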